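/- For every m ≥ 1, the disjoint union of complete graphs K_1, K_2, …, K_{m+1} (which has m(m+3)/2 + 1 vertices and is a perfect graph) cannot have its vertex set partitioned into at most m parts each of which is a clique or an independent set. -/

import Mathlib

/-- A set `S` of vertices is `k`-sparse if every vertex of `S` has at most `k`
neighbors in `S`. -/
def kSparse {V : Type*} (G : SimpleGraph V) (k : ℕ) (S : Set V) : Prop :=
  ∀ v ∈ S, {u | u ∈ S ∧ G.Adj v u}.ncard ≤ k

/-- A set `S` of vertices is `k`-dense if every vertex of `S` has at most `k`
non-neighbors in `S` other than itself. -/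
def kDense {V : Type*} (G : SimpleGraph V) (k : ℕ) (S : Set V) : Prop :=
  ∀ v ∈ S, {u | u ∈ S ∧ u ≠ v ∧ ¬ G.Adj v u}.ncard ≤ k

/-- A graph is perfect if every induced subgraph has chromatic number equal to its
clique number. -/
def IsPerfect {V : Type*} (G : SimpleGraph V) : Prop :=
  ∀ S : Set V, (G.induce S).chromaticNumber = ((G.induce S).cliqueNum : ℕ∞)

/-- The disjoint union of the complete graphs `K_1, K_2, …, K_{m+1}`. -/
def multiK (m : ℕ) : SimpleGraph ((i : Fin (m + 1)) × Fin (i.1 + 1)) where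
  Adj a b := a.1 = b.1 ∧ a ≠ b
  symm := ⟨fun _ _ ⟨h1, h2⟩ => ⟨h1.symm, fun h => h2 h.symm⟩⟩
  loopless := ⟨fun _ ⟨_, h⟩ => h rfl⟩

lemma multiK_adj (m : ℕ) (a b : (i : Fin (m + 1)) × Fin (i.1 + 1)) :
    (multiK m).Adj a b ↔ a.1 = b.1 ∧ a ≠ b := Iff.rfl

open SimpleGraph Finset

abbrev Vtx (m : ℕ) := (i : Fin (m + 1)) × Fin (i.1 + 1)

lemma sig_ext {m : ℕ} {a b : (i : Fin (m + 1)) × Fin (i.1 + 1)}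
    (h1 : a.1 = b.1) (h2 : a.2.val = b.2.val) : a = b := by
  obtain ⟨a1, a2⟩ := a; obtain ⟨b1, b2⟩ := b
  dsimp at h1 h2
  subst h1
  exact congrArg _ (Fin.ext h2)

-- perfectness
lemma multiK_perfect (m : ℕ) (S : Set ((i : Fin (m + 1)) × Fin (i.1 + 1))) :
    ((multiK m).induce S).chromaticNumber = (((multiK m).induce S).cliqueNum : ℕ∞) := by
  classical
  have : Fintype S := Fintype.ofFinite _
  set H := (multiK m).induce S with hH
  have hadj : ∀ u v : S, H.Adj u v ↔ (u : Vtx m).1 = (v : Vtx m).1 ∧ (u : S) ≠ v := by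
    intro u v
    constructor
    · intro h; obtain ⟨h1, h2⟩ := (multiK_adj _ _ _).1 h; exact ⟨h1, fun h => h2 (congrArg _ h)⟩
    · rintro ⟨h1, h2⟩; exact (multiK_adj _ _ _).2 ⟨h1, fun h => h2 (Subtype.ext h)⟩
  -- the rank coloring
  set r : S → ℕ := fun v => (univ.filter (fun u : S =>
      (u : Vtx m).1 = (v : Vtx m).1 ∧ (u : Vtx m).2.val < (v : Vtx m).2.val)).card with hr
  have hclique : ∀ v : S, H.IsNClique (r v + 1)
      (insert v (univ.filter (fun u : S =>
        (u : Vtx m).1 = (v : Vtx m).1 ∧ (u : Vtx m).2.val < (v : Vtx m).2.val))) := by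
    intro v
    constructor
    · intro x hx y hy hxy
      simp only [coe_insert, Set.mem_insert_iff, mem_coe, mem_filter, mem_univ, true_and] at hx hy
      rw [hadj]
      refine ⟨?_, fun h => hxy (by exact_mod_cast h)⟩
      rcases hx with rfl | hx <;> rcases hy with rfl | hy
      · exact rfl
      · exact hy.1.symm
      · exact hx.1
      · exact hx.1.trans hy.1.symm
    · rw [card_insert_of_notMem (by simp), hr]
  have hcard : ∀ v : S, r v + 1 ≤ H.cliqueNum := by
    intro v
    exact (hclique v).card_eq ▸ (hclique v).isClique.card_le_cliqueNum
  -- coloring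
  have hcol : H.Colorable H.cliqueNum := by
    refine ⟨Coloring.mk (fun v => ⟨r v, lt_of_lt_of_le (Nat.lt_succ_self _) (hcard v)⟩) ?_⟩
    intro u v huv
    rw [hadj] at huv
    obtain ⟨h1, h2⟩ := huv
    have hne : (u : Vtx m).2.val ≠ (v : Vtx m).2.val := by
      intro h
      exact h2 (Subtype.ext (sig_ext h1 h))
    -- wlog u.2 < v.2
    have key : ∀ a b : S, (a : Vtx m).1 = (b : Vtx m).1 →
        (a : Vtx m).2.val < (b : Vtx m).2.val → r a < r b := by
      intro a b hab hlt
      apply Finset.card_lt_card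
      constructor
      · intro x hx
        simp only [mem_filter, mem_univ, true_and] at hx ⊢
        exact ⟨hx.1.trans hab, hx.2.trans hlt⟩
      · intro hsub
        have ha : a ∈ univ.filter (fun u : S =>
            (u : Vtx m).1 = (b : Vtx m).1 ∧ (u : Vtx m).2.val < (b : Vtx m).2.val) := by
          simp only [mem_filter, mem_univ, true_and]; exact ⟨hab, hlt⟩
        have := hsub ha
        simp only [mem_filter, mem_univ, true_and] at this
        exact lt_irrefl _ this
    rcases lt_or_gt_of_ne hne with h | h
    · exact fun hc => absurd (Fin.val_eq_of_eq hc) (Nat.ne_of_lt (key u v h1 h))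
    · exact fun hc => absurd (Fin.val_eq_of_eq hc) (Nat.ne_of_gt (key v u h1.symm h))
  refine le_antisymm hcol.chromaticNumber_le ?_
  by_contra hlt
  push_neg at hlt
  obtain ⟨s, hs⟩ := H.exists_isNClique_cliqueNum
  exact (cliqueFree_of_chromaticNumber_lt hlt) s hs

/-- For every `m ≥ 1`, the disjoint union of `K_1, …, K_{m+1}` is a perfect graph on
`m(m+3)/2 + 1` vertices whose vertex set cannot be partitioned into at most `m` parts
each of which is a clique or an independent set. -/
theorem stmt14 (m : ℕ) (hm : 1 ≤ m) :
    Fintype.card ((i : Fin (m + 1)) × Fin (i.1 + 1)) = m * (m + 3) / 2 + 1 ∧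
    IsPerfect (multiK m) ∧
    ¬ ∃ f : ((i : Fin (m + 1)) × Fin (i.1 + 1)) → Fin m,
      ∀ c, (multiK m).IsClique {v | f v = c} ∨
        (∀ x ∈ {v | f v = c}, ∀ y ∈ {v | f v = c}, ¬ (multiK m).Adj x y) := by
  classical
  refine ⟨?_, multiK_perfect m, ?_⟩
  · -- cardinality
    obtain ⟨k, hk⟩ : ∃ k, m * (m + 3) = 2 * k := by
      rcases Nat.even_or_odd m with ⟨t, ht⟩ | ⟨t, ht⟩
      · exact ⟨t * (m + 3), by subst ht; ring⟩
      · exact ⟨m * (t + 2), by subst ht; ring⟩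
    have h1 : Fintype.card ((i : Fin (m + 1)) × Fin (i.1 + 1)) = ∑ i ∈ range (m + 2), i := by
      rw [Fintype.card_sigma]
      simp only [Fintype.card_fin]
      rw [Finset.sum_range_succ' (fun i => i) (m + 1)]
      simp [Fin.sum_univ_eq_sum_range (fun i => i + 1) (m + 1)]
    have h2 := Finset.sum_range_id_mul_two (m + 2)
    have h3 : (m + 2) * (m + 2 - 1) = m * (m + 3) + 2 := by
      simp; ring
    rw [h1, hk]
    omega
  · rintro ⟨f, hf⟩
    set C : Finset (Fin m) := univ.filter (fun c => (multiK m).IsClique {v | f v = c}) with hC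
    set T : Finset (Fin (m + 1)) :=
      univ.filter (fun i => ∃ c ∈ C, ∃ j, f ⟨i, j⟩ = c) with hT
    -- each clique class lives in one component, so T.card ≤ C.card
    have hTC : T.card ≤ C.card := by
      have hex : ∀ i : Fin (m + 1), ∃ c, i ∈ T → (c ∈ C ∧ ∃ j, f ⟨i, j⟩ = c) := by
        intro i
        by_cases hi : i ∈ T
        · rw [hT, mem_filter] at hi
          obtain ⟨c, hc, hj⟩ := hi.2
          exact ⟨c, fun _ => ⟨hc, hj⟩⟩
        · exact ⟨⟨0, hm⟩, fun h => absurd h hi⟩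
      choose g hg using hex
      apply Finset.card_le_card_of_injOn g (fun i hi => (hg i hi).1)
      intro i hi i' hi' hgg
      by_contra hne
      obtain ⟨j, hj⟩ := (hg i hi).2
      obtain ⟨j', hj'⟩ := (hg i' hi').2
      have hcl : (multiK m).IsClique {v | f v = g i} := by
        have := (hg i hi).1; rw [hC, mem_filter] at this; exact this.2
      have hadj := hcl (x := ⟨i, j⟩) (by simpa [Set.mem_setOf_eq] using hj)
        (y := ⟨i', j'⟩) (by simp [Set.mem_setOf_eq, hj', hgg])
        (by intro h; exact hne (congrArg Sigma.fst h))
      exact hne ((multiK_adj _ _ _).1 hadj).1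
    have hCm : C.card ≤ m := by
      calc C.card ≤ (univ : Finset (Fin m)).card := card_le_card (subset_univ _)
        _ = m := by simp
    -- find a big component untouched by cliques
    have hbig : ∃ i : Fin (m + 1), i ∉ T ∧ m - C.card ≤ i.val := by
      by_contra hno
      push_neg at hno
      have hsub : (univ.filter (fun i : Fin (m + 1) => m - C.card ≤ i.val)) ⊆ T := by
        intro i hi
        rw [mem_filter] at hi
        by_contra hiT
        exact absurd (hno i hiT) (not_lt.mpr hi.2)
      have hcardU : (univ.filter (fun i : Fin (m + 1) => m - C.card ≤ i.val)).card
          = C.card + 1 := by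
        have heq : univ.filter (fun i : Fin (m + 1) => m - C.card ≤ i.val)
            = Finset.Ici (⟨m - C.card, by omega⟩ : Fin (m + 1)) := by
          ext i; simp [Fin.le_def]
        rw [heq, Fin.card_Ici]
        simp
        omega
      have := card_le_card hsub
      omega
    obtain ⟨i₀, hi₀T, hi₀big⟩ := hbig
    -- component i₀ injects into non-clique colors
    have hnotC : ∀ j : Fin (i₀.1 + 1), f ⟨i₀, j⟩ ∉ C := by
      intro j hjC
      apply hi₀T
      rw [hT, mem_filter]
      exact ⟨mem_univ _, f ⟨i₀, j⟩, hjC, j, rfl⟩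
    have hinj : ∀ j j' : Fin (i₀.1 + 1), f ⟨i₀, j⟩ = f ⟨i₀, j'⟩ → j = j' := by
      intro j j' hjj
      by_contra hne
      have hind := (hf (f ⟨i₀, j⟩)).resolve_left (by
        intro hcl
        exact hnotC j (by rw [hC, mem_filter]; exact ⟨mem_univ _, hcl⟩))
      exact hind ⟨i₀, j⟩ rfl ⟨i₀, j'⟩ hjj.symm
        ((multiK_adj _ _ _).2 ⟨rfl, fun h => hne (by simpa using h)⟩)
    have hle : i₀.1 + 1 ≤ m - C.card := by
      have : (univ : Finset (Fin (i₀.1 + 1))).card ≤ (univ \ C).card := by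
        apply Finset.card_le_card_of_injOn (fun j => f ⟨i₀, j⟩)
        · intro j _; simp only [coe_sdiff, Set.mem_diff, mem_coe]; exact ⟨mem_univ _, hnotC j⟩
        · intro j _ j' _ h; exact hinj j j' h
      simpa [card_sdiff_of_subset (subset_univ C)] using this
    omega
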